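/- For integers a > b ≥ 0, the minimal addition chain length of 2^a + 2^b equals a + 1, i.e., ℓ(2^a + 2^b) = a + 1. -/

import Mathlib

/-- An addition chain of length `r` for `n`, given by `a : ℕ → ℕ`. -/
def IsAdditionChain (r : ℕ) (a : ℕ → ℕ) (n : ℕ) : Prop :=
  a 0 = 1 ∧ a r = n ∧ (∀ k, k < r → a k < a (k + 1)) ∧
    ∀ k, 1 ≤ k → k ≤ r → ∃ i j, i < k ∧ j < k ∧ a k = a i + a j

/-- Minimal length of an addition chain for `n`. -/
noncomputable def addLen (n : ℕ) : ℕ :=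
  sInf {r | ∃ a : ℕ → ℕ, IsAdditionChain r a n}

lemma chain_mono {r : ℕ} {c : ℕ → ℕ} {n : ℕ} (h : IsAdditionChain r c n) :
    ∀ i j, i ≤ j → j ≤ r → c i ≤ c j := by
  intro i j hij hjr
  induction j with
  | zero => simpa [Nat.le_zero.mp hij]
  | succ j ih =>
    rcases Nat.lt_or_ge i (j+1) with h1 | h1
    · have := ih (Nat.lt_succ_iff.mp h1) (le_trans (Nat.le_succ j) hjr)
      exact le_trans this (le_of_lt (h.2.2.1 j (Nat.lt_of_succ_le hjr)))
    · have : i = j + 1 := le_antisymm hij h1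
      simp [this]

lemma chain_le_pow {r : ℕ} {c : ℕ → ℕ} {n : ℕ} (h : IsAdditionChain r c n) :
    ∀ k, k ≤ r → c k ≤ 2 ^ k := by
  intro k
  induction k with
  | zero => intro _; simp [h.1]
  | succ k ih =>
    intro hk
    obtain ⟨i, j, hi, hj, heq⟩ := h.2.2.2 (k+1) (Nat.succ_le_succ (Nat.zero_le k)) hk
    have hik : c i ≤ c k := chain_mono h i k (Nat.lt_succ_iff.mp hi) (le_trans (Nat.le_succ k) hk)
    have hjk : c j ≤ c k := chain_mono h j k (Nat.lt_succ_iff.mp hj) (le_trans (Nat.le_succ k) hk)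
    have hck : c k ≤ 2 ^ k := ih (le_trans (Nat.le_succ k) hk)
    calc c (k+1) = c i + c j := heq
      _ ≤ 2 ^ k + 2 ^ k := add_le_add (le_trans hik hck) (le_trans hjk hck)
      _ = 2 ^ (k+1) := by ring

theorem stmt1 : ∀ a b : ℕ, b < a → addLen (2 ^ a + 2 ^ b) = a + 1 := by
  intro a b hba
  apply le_antisymm
  · -- upper bound: explicit chain
    apply Nat.sInf_le
    refine ⟨fun k => if k ≤ a then 2 ^ k else 2 ^ a + 2 ^ b, ?_, ?_, ?_, ?_⟩
    · simp
    · simp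
    · intro k hk
      rcases Nat.lt_or_ge k a with h1 | h1
      · have h2 : k + 1 ≤ a := h1
        simp only [le_of_lt h1, h2, if_pos]
        exact Nat.pow_lt_pow_right one_lt_two (Nat.lt_succ_self k)
      · have hka : k = a := le_antisymm (Nat.lt_succ_iff.mp hk) h1
        subst hka
        simp only [le_refl, if_pos, Nat.lt_succ_self, Nat.not_succ_le_self, if_neg]
        exact Nat.lt_add_of_pos_right (Nat.pow_pos (n := b) two_pos)
    · intro k hk1 hk2
      rcases Nat.lt_or_ge k (a+1) with h1 | h1
      · have hka : k ≤ a := Nat.lt_succ_iff.mp h1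
        refine ⟨k - 1, k - 1, ?_, ?_, ?_⟩
        · omega
        · omega
        · have hk1a : k - 1 ≤ a := le_trans (Nat.sub_le k 1) hka
          simp only [hka, hk1a, if_pos]
          have : k = (k - 1) + 1 := (Nat.succ_pred_eq_of_pos hk1).symm
          conv_lhs => rw [this, pow_succ]
          ring
      · have hka : k = a + 1 := le_antisymm hk2 h1
        subst hka
        refine ⟨a, b, Nat.lt_succ_self a, Nat.lt_succ_of_lt hba, ?_⟩
        simp [Nat.not_succ_le_self, le_of_lt hba]
  · -- lower bound
    apply le_csInf
    · exact ⟨a + 1, fun k => if k ≤ a then 2 ^ k else 2 ^ a + 2 ^ b, by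
        refine ⟨by simp, by simp, ?_, ?_⟩
        · intro k hk
          rcases Nat.lt_or_ge k a with h1 | h1
          · have h2 : k + 1 ≤ a := h1
            simp only [le_of_lt h1, h2, if_pos]
            exact Nat.pow_lt_pow_right one_lt_two (Nat.lt_succ_self k)
          · have hka : k = a := le_antisymm (Nat.lt_succ_iff.mp hk) h1
            subst hka
            simp only [le_refl, if_pos, Nat.not_succ_le_self, if_neg]
            exact Nat.lt_add_of_pos_right (Nat.pow_pos (n := b) two_pos)
        · intro k hk1 hk2
          rcases Nat.lt_or_ge k (a+1) with h1 | h1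
          · have hka : k ≤ a := Nat.lt_succ_iff.mp h1
            refine ⟨k - 1, k - 1, by omega, by omega, ?_⟩
            have hk1a : k - 1 ≤ a := le_trans (Nat.sub_le k 1) hka
            simp only [hka, hk1a, if_pos]
            have : k = (k - 1) + 1 := (Nat.succ_pred_eq_of_pos hk1).symm
            conv_lhs => rw [this, pow_succ]
            ring
          · have hka : k = a + 1 := le_antisymm hk2 h1
            subst hka
            refine ⟨a, b, Nat.lt_succ_self a, Nat.lt_succ_of_lt hba, ?_⟩
            simp [Nat.not_succ_le_self, le_of_lt hba]⟩
    · rintro r ⟨c, hc⟩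
      have h1 : c r ≤ 2 ^ r := chain_le_pow hc r le_rfl
      have h2 : 2 ^ a < 2 ^ a + 2 ^ b := Nat.lt_add_of_pos_right (Nat.pow_pos (n := b) two_pos)
      have h3 : 2 ^ a < 2 ^ r := lt_of_lt_of_le (hc.2.1 ▸ h2) h1
      have : a < r := by
        by_contra hle
        push_neg at hle
        exact absurd (Nat.pow_le_pow_right two_pos hle) (not_le_of_gt h3)
      omega
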